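/- arXiv:0904.4230 — 3 statements merged into one kernel-verified Lean document; each statement's English description precedes it below -/
import Mathlib

section
/- Let H be a semigroup and G an H-group satisfying H-max-n. Then the space 𝒩_H(G) is scattered, and cb_H(G) ≤ ℓ_H(G). -/
noncomputable section

/-- Chabauty topology on the set of subgroups of `G`: the topology induced from the
product topology on `{0,1}^G` via indicator functions. -/
noncomputable instance chabautyTopology {G : Type*} [Group G] : TopologicalSpace (Subgroup G) :=
  TopologicalSpace.induced (fun N g => @decide (g ∈ N) (Classical.propDecidable _))
    (inferInstance : TopologicalSpace (G → Bool))

/-- Iterated Cantor–Bendixson derivatives of the space `X`: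
`X^(0) = X`, `X^(α+1)` is the set of accumulation points of `X^(α)`, and
`X^(λ) = ⋂_{β<λ} X^(β)` for limit `λ`. -/
noncomputable def cbD (X : Type*) [TopologicalSpace X] (o : Ordinal) : Set X :=
  Ordinal.limitRecOn o Set.univ (fun _ ih => {x | AccPt x (Filter.principal ih)})
    (fun o _ ih => ⋂ β : Set.Iio o, ih β.1 β.2)

/-- The point `x` has Cantor–Bendixson rank exactly `α` in `X`: it belongs to the `α`-th
derivative but not to the `(α+1)`-st (so `α` is the largest ordinal with `x ∈ X^(α)`). -/
def CBRankEq {X : Type*} [TopologicalSpace X] (x : X) (α : Ordinal) : Prop :=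
  x ∈ cbD X α ∧ x ∉ cbD X (α + 1)

/-- The Cantor–Bendixson rank of a point: the largest `α` with `x ∈ X^(α)`
(the set of such `α` is an initial segment of the ordinals, closed under limits). -/
noncomputable def cbRank {X : Type*} [TopologicalSpace X] (x : X) : Ordinal :=
  sSup {α | x ∈ cbD X α}

/-- The trivial subgroup, as a point of the space `𝒩(G)` of normal subgroups of `G`
(with its Chabauty topology); `cb(G)` is the Cantor–Bendixson rank of this point. -/
def nsBot (G : Type*) [Group G] : {N : Subgroup G // N.Normal} := ⟨⊥, inferInstance⟩

universe u

open Classical in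
/-- The ordinal-valued "length" attached to an element of a poset `L`, defined by
well-founded recursion on `>` (available under the max-n condition, i.e. well-foundedness
of `>`; junk value `0` otherwise): `gtRank x = sup { gtRank y + 1 : y > x }`.

For `L` the lattice of (`H`-stable) normal subgroups of a group `G` (resp. of submodules
of a module `M`), `gtRank N` is the ordinal length `ℓ(G/N)` (resp. `ℓ(M/N)`) of the
quotient, since (`H`-stable) normal subgroups of `G/N` correspond to those of `G`
containing `N`; in particular `gtRank ⊥ = ℓ(G)` (resp. `ℓ(M)`). -/
noncomputable def gtRank {L : Type u} [Preorder L] (x : L) : Ordinal.{u} :=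
  if h : WellFounded ((· > ·) : L → L → Prop) then (h.apply x).rank else 0

/-- An `H`-group structure on `G` (for `H` a semigroup) is an action of `H` on `G` by group
endomorphisms, i.e. a semigroup homomorphism `H → End(G)`. A normal subgroup `N` is
`H`-stable if it is invariant under the action. -/
def HStable {H G : Type*} [Mul H] [Group G] (act : H →ₙ* Monoid.End G)
    (N : Subgroup G) : Prop :=
  ∀ (h : H) (g : G), g ∈ N → act h g ∈ N

/-- The trivial subgroup as a point of the space `𝒩_H(G)` of `H`-stable normal
subgroups of `G`. -/
def hBot {H G : Type*} [Mul H] [Group G] (act : H →ₙ* Monoid.End G) :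
    {N : Subgroup G // N.Normal ∧ HStable act N} :=
  ⟨⊥, inferInstance, fun h g hg => by
    rw [Subgroup.mem_bot] at hg ⊢
    rw [hg, map_one]⟩

/-- The trivial subgroup as an element of the lattice of `H`-stable normal subgroups of `G`
contained in `M`; this lattice is the lattice of `GH`-stable normal subgroups of the
`GH`-group `M` (where `GH = G ⋊ H` acts on the normal subgroup `M` by conjugation and by
the `H`-action), so that `gtRank` of this element is the length `ℓ_{GH}(M)`. -/
def hBotIn {H G : Type*} [Mul H] [Group G] (act : H →ₙ* Monoid.End G) (M : Subgroup G) :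
    {K : Subgroup G // (K.Normal ∧ HStable act K) ∧ K ≤ M} :=
  ⟨⊥, ⟨inferInstance, fun h g hg => by
    rw [Subgroup.mem_bot] at hg ⊢
    rw [hg, map_one]⟩, bot_le⟩

/-! ### Auxiliary lemmas -/

section cbDLemmas

open Filter Topology

variable {X : Type*} [TopologicalSpace X]

lemma cbD_zero : cbD X 0 = Set.univ :=
  Ordinal.limitRecOn_zero ..

lemma cbD_succ (o : Ordinal) :
    cbD X (o + 1) = derivedSet (cbD X o) := by
  rw [cbD, Ordinal.add_one_eq_succ, Ordinal.limitRecOn_succ]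
  rfl

lemma cbD_limit {o : Ordinal} (h : Order.IsSuccLimit o) :
    cbD X o = ⋂ β : Set.Iio o, cbD X β.1 := by
  rw [cbD, Ordinal.limitRecOn_limit _ _ _ _ h]
  rfl

lemma isClosed_cbD [T1Space X] (o : Ordinal) : IsClosed (cbD X o) := by
  induction o using Ordinal.limitRecOn with
  | zero => rw [cbD_zero]; exact isClosed_univ
  | add_one o ih =>
    rw [cbD_succ]
    exact isClosed_derivedSet _
  | limit o ho ih =>
    rw [cbD_limit ho]
    exact isClosed_iInter fun β => ih β.1 β.2

lemma cbD_anti [T1Space X] : ∀ {α β : Ordinal}, α ≤ β → cbD X β ⊆ cbD X α := by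
  intro α β
  induction β using Ordinal.limitRecOn with
  | zero => intro h; rw [nonpos_iff_eq_zero] at h; subst h; exact subset_rfl
  | add_one β ih =>
    intro h
    rcases eq_or_lt_of_le h with rfl | h
    · exact subset_rfl
    · rw [Ordinal.add_one_eq_succ, Order.lt_succ_iff] at h
      refine subset_trans ?_ (ih h)
      rw [cbD_succ]
      exact (isClosed_iff_derivedSet_subset _).mp (isClosed_cbD β)
  | limit β hβ ih =>
    intro h
    rcases eq_or_lt_of_le h with rfl | h
    · exact subset_rfl
    · rw [cbD_limit hβ]
      exact Set.iInter_subset_of_subset ⟨α, h⟩ subset_rfl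

end cbDLemmas

section chabauty

open Filter Topology

variable {H : Type*} [Semigroup H] {G : Type u} [Group G] (act : H →ₙ* Monoid.End G)

/-- The space of `H`-stable normal subgroups. -/
@[reducible] private def HNS : Type u := {N : Subgroup G // N.Normal ∧ HStable act N}

private lemma chabauty_embedding :
    Topology.IsEmbedding (fun N g => @decide (g ∈ N) (Classical.propDecidable _) :
      Subgroup G → G → Bool) := by
  refine ⟨⟨rfl⟩, fun N M h => ?_⟩
  ext g
  have := congrFun h g
  simpa [decide_eq_decide] using this

instance chabauty_t2 : T2Space (Subgroup G) :=
  chabauty_embedding.t2Space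

/-- The set of `H`-stable normal subgroups containing a given element is open. -/
private lemma isOpen_mem (g : G) : IsOpen {M : (HNS act) | g ∈ M.1} := by
  have hc : Continuous (fun M : (HNS act) => @decide (g ∈ M.1) (Classical.propDecidable _)) := by
    exact ((continuous_apply g).comp
      (continuous_induced_dom (f := (fun N h => @decide (h ∈ N) (Classical.propDecidable _) :
        Subgroup G → G → Bool)))).comp continuous_subtype_val
  have : {M : (HNS act) | g ∈ M.1} =
      (fun M : (HNS act) => @decide (g ∈ M.1) (Classical.propDecidable _)) ⁻¹' {true} := by
    ext M; simp
  rw [this]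
  exact (isOpen_discrete _).preimage hc

/-- The closure operation: smallest `H`-stable normal subgroup containing a finite set. -/
private def hcl (F : Finset G) : Subgroup G :=
  sInf {K : Subgroup G | (K.Normal ∧ HStable act K) ∧ (F : Set G) ⊆ K}

private lemma mem_hcl {F : Finset G} {g : G} :
    g ∈ hcl act F ↔ ∀ K : Subgroup G, (K.Normal ∧ HStable act K) → (F : Set G) ⊆ K → g ∈ K := by
  simp [hcl, Subgroup.mem_sInf]

private lemma hcl_normal_stable (F : Finset G) :
    (hcl act F).Normal ∧ HStable act (hcl act F) := by
  constructor
  · constructor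
    intro n hn g
    rw [mem_hcl] at hn ⊢
    intro K hK hFK
    exact hK.1.conj_mem n (hn K hK hFK) g
  · intro h g hg
    rw [mem_hcl] at hg ⊢
    intro K hK hFK
    exact hK.2 h g (hg K hK hFK)

private lemma hcl_le {F : Finset G} {M : (HNS act)} (h : (F : Set G) ⊆ M.1) : hcl act F ≤ M.1 :=
  sInf_le ⟨M.2, h⟩

private lemma subset_hcl (F : Finset G) : (F : Set G) ⊆ hcl act F := by
  intro g hg
  rw [SetLike.mem_coe, mem_hcl]
  intro K _ hFK
  exact hFK hg

/-- Under max-n, every `H`-stable normal subgroup is the closure of a finite set. -/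
private lemma exists_finset_hcl
    (hmax : WellFounded ((· > ·) : (HNS act) → (HNS act) → Prop)) (N : (HNS act)) :
    ∃ F : Finset G, (F : Set G) ⊆ N.1 ∧ ∀ M : (HNS act), ((F : Set G) ⊆ M.1 ↔ N.1 ≤ M.1) := by
  classical
  set S : Set (HNS act) := {K : (HNS act) | ∃ F : Finset G, (F : Set G) ⊆ N.1 ∧ K.1 = hcl act F} with hS
  have hne : S.Nonempty := ⟨⟨hcl act ∅, hcl_normal_stable act ∅⟩, ∅, by simp, rfl⟩
  obtain ⟨m, ⟨F₀, hF₀N, hmF₀⟩, hmmax⟩ := hmax.has_min S hne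
  have hmN : m.1 ≤ N.1 := by
    rw [hmF₀]; exact hcl_le act hF₀N
  have hNm : N.1 ≤ m.1 := by
    intro g hg
    by_contra hgm
    set F₁ : Finset G := insert g F₀ with hF₁
    have hF₁N : (F₁ : Set G) ⊆ N.1 := by
      rw [hF₁, Finset.coe_insert, Set.insert_subset_iff]
      exact ⟨hg, hF₀N⟩
    set m' : (HNS act) := ⟨hcl act F₁, hcl_normal_stable act F₁⟩ with hm'
    have hle : m ≤ m' := by
      show m.1 ≤ m'.1
      rw [hmF₀]
      apply sInf_le_sInf
      intro K hK
      exact ⟨hK.1, subset_trans (by simp [hF₁]) hK.2⟩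
    have hgm' : g ∈ m'.1 := subset_hcl act F₁ (by simp [hF₁])
    have hlt : m < m' := lt_of_le_of_ne hle (by
      intro h
      rw [h] at hgm
      exact hgm hgm')
    exact hmmax m' ⟨F₁, hF₁N, rfl⟩ hlt
  refine ⟨F₀, hF₀N, fun M => ⟨fun h => ?_, fun h => subset_trans hF₀N (by exact_mod_cast h)⟩⟩
  calc N.1 ≤ m.1 := hNm
    _ = hcl act F₀ := hmF₀
    _ ≤ M.1 := hcl_le act h

/-- Key step: every point has Cantor–Bendixson rank at most its `>`-rank. -/
private lemma not_mem_cbD_rank_succ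
    (hmax : WellFounded ((· > ·) : (HNS act) → (HNS act) → Prop)) (N : (HNS act)) :
    N ∉ cbD (HNS act) ((hmax.apply N).rank + 1) := by
  induction N using WellFounded.induction hmax with
  | _ N IH =>
  intro hN
  rw [cbD_succ] at hN
  obtain ⟨F₀, hF₀N, hF₀⟩ := exists_finset_hcl act hmax N
  have hUopen : IsOpen {M : (HNS act) | (F₀ : Set G) ⊆ M.1} := by
    have : {M : (HNS act) | (F₀ : Set G) ⊆ M.1} = ⋂ g ∈ F₀, {M : (HNS act) | g ∈ M.1} := by
      ext M; simp [Set.subset_def]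
    rw [this]
    exact isOpen_biInter_finset fun g _ => isOpen_mem act g
  have hNU : N ∈ {M : (HNS act) | (F₀ : Set G) ⊆ M.1} := hF₀N
  rw [mem_derivedSet, accPt_iff_nhds] at hN
  obtain ⟨M, ⟨hMU, hMcb⟩, hMne⟩ := hN _ (hUopen.mem_nhds hNU)
  have hNM : N < M := lt_of_le_of_ne ((hF₀ M).mp hMU) (Ne.symm hMne)
  have hrank : (hmax.apply M).rank < (hmax.apply N).rank := by
    have := Acc.rank_lt_of_rel (hmax.apply N) (show M > N from hNM)
    convert this using 2
  have hle : (hmax.apply M).rank + 1 ≤ (hmax.apply N).rank := by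
    rw [Ordinal.add_one_eq_succ, Order.succ_le_iff]
    exact hrank
  exact IH M hNM (cbD_anti hle hMcb)

end chabauty

/-- Let `H` be a semigroup and `G` an `H`-group satisfying `H`-max-n
(well-foundedness of `>` on the lattice `𝒩_H(G)` of `H`-stable normal subgroups). Then the
space `𝒩_H(G)` is scattered (some Cantor–Bendixson derivative is empty), and
`cb_H(G) ≤ ℓ_H(G)` (the rank of `{1}` exists and is at most the ordinal length of `G`,
which is `gtRank` of the trivial subgroup in the lattice `𝒩_H(G)`). -/
theorem scattered_and_cb_le_length_of_hMaxn {H : Type*} [Semigroup H] {G : Type u} [Group G]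
    (act : H →ₙ* Monoid.End G)
    (hmax : WellFounded ((· > ·) :
      {N : Subgroup G // N.Normal ∧ HStable act N} →
        {N : Subgroup G // N.Normal ∧ HStable act N} → Prop)) :
    (∃ α : Ordinal.{u}, cbD {N : Subgroup G // N.Normal ∧ HStable act N} α = ∅) ∧
    hBot act ∉ cbD {N : Subgroup G // N.Normal ∧ HStable act N} (gtRank (hBot act) + 1) := by
  have hrank_eq : gtRank (hBot act) = (hmax.apply (hBot act)).rank := by
    rw [gtRank, dif_pos hmax]
  have hempty : cbD {N : Subgroup G // N.Normal ∧ HStable act N}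
      ((hmax.apply (hBot act)).rank + 1) = ∅ := by
    ext M
    simp only [Set.mem_empty_iff_false, iff_false]
    intro hM
    have hbotle : hBot act ≤ M := by
      show (hBot act).1 ≤ M.1
      exact bot_le
    rcases eq_or_lt_of_le hbotle with h | hlt
    · exact not_mem_cbD_rank_succ act hmax M (h ▸ hM)
    · have hr : (hmax.apply M).rank < (hmax.apply (hBot act)).rank :=
        Acc.rank_lt_of_rel (hmax.apply (hBot act)) hlt
      have hle : (hmax.apply M).rank + 1 ≤ (hmax.apply (hBot act)).rank + 1 := by
        rw [Ordinal.add_one_eq_succ, Ordinal.add_one_eq_succ, Order.succ_le_succ_iff]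
        exact hr.le
      exact not_mem_cbD_rank_succ act hmax M (cbD_anti hle hM)
  rw [hrank_eq]
  exact ⟨⟨_, hempty⟩, by rw [hempty]; exact Set.notMem_empty _⟩
end
end

section
/- Let H be a semigroup and G an H-group with H-max-n, in an exact sequence of H-groups 1 → M → G → Q → 1 (M an H-stable normal subgroup, Q = G/M). Then ℓ_H(Q) + ℓ_{GH}(M) ≤ ℓ_H(G) ≤ ℓ_H(Q) ⊕ ℓ_{GH}(M), where ⊕ is the natural (Hessenberg) sum of ordinals. Moreover, if G = M × Q as an H-group, then ℓ_H(G) = ℓ_H(Q) ⊕ ℓ_{GH}(M). -/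
noncomputable section

universe u

namespace Ordinal

/-- Natural (Hessenberg) addition of ordinals, as defined in the older Mathlib
(`Mathlib/SetTheory/Ordinal/NaturalOps.lean`), which has since been removed. -/
noncomputable def nadd (a b : Ordinal.{u}) : Ordinal.{u} :=
  max (⨆ x : Set.Iio a, Order.succ (nadd x.1 b)) (⨆ x : Set.Iio b, Order.succ (nadd a x.1))
termination_by (a, b)
decreasing_by all_goals cases x; decreasing_tactic

end Ordinal

namespace NaturalOps

scoped infixl:65 " ♯ " => Ordinal.nadd

end NaturalOps

/-! ### Auxiliary lemmas for the proof -/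

section RankAux
variable {L : Type u} [Preorder L]

lemma gtRank_eq_rank (h : WellFounded ((· > ·) : L → L → Prop)) (x : L) :
    gtRank x = (h.apply x).rank := dif_pos h

lemma gtRank_lt_of_gt (h : WellFounded ((· > ·) : L → L → Prop)) {x y : L} (hxy : y > x) :
    gtRank y < gtRank x := by
  rw [gtRank_eq_rank h, gtRank_eq_rank h]
  exact Acc.rank_lt_of_rel _ hxy

lemma gtRank_le (h : WellFounded ((· > ·) : L → L → Prop)) {x : L} {c : Ordinal}
    (H : ∀ y, y > x → gtRank y < c) : gtRank x ≤ c := by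
  rw [gtRank_eq_rank h, Acc.rank_eq]
  apply Ordinal.iSup_le
  rintro ⟨y, hy⟩
  rw [Order.succ_le_iff]
  exact (gtRank_eq_rank h y).symm.trans_lt (H y hy)

lemma exists_gt_of_lt_gtRank (h : WellFounded ((· > ·) : L → L → Prop)) {x : L} {o : Ordinal}
    (ho : o < gtRank x) : ∃ y, y > x ∧ o ≤ gtRank y := by
  rw [gtRank_eq_rank h, Acc.rank_eq, Ordinal.lt_iSup_iff] at ho
  obtain ⟨⟨y, hy⟩, ho⟩ := ho
  exact ⟨y, hy, by rw [gtRank_eq_rank h]; exact Order.lt_succ_iff.1 ho⟩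

lemma gtRank_le_of_le {L : Type u} [PartialOrder L]
    (h : WellFounded ((· > ·) : L → L → Prop)) {x y : L} (hxy : x ≤ y) :
    gtRank y ≤ gtRank x := by
  rcases hxy.lt_or_eq with h' | h'
  · exact (gtRank_lt_of_gt h h').le
  · rw [h']

end RankAux

section GroupAux
open scoped Pointwise

variable {H : Type*} [Mul H] {G : Type*} [Group G] {act : H →ₙ* Monoid.End G}

lemma HStable.inf' {N K : Subgroup G} (hN : HStable act N) (hK : HStable act K) :
    HStable act (N ⊓ K) := fun h g hg => ⟨hN h g hg.1, hK h g hg.2⟩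

lemma HStable.sup' {N K : Subgroup G} (hN : HStable act N) (hK : HStable act K) :
    HStable act (N ⊔ K) := by
  intro h
  have hle : N ⊔ K ≤ Subgroup.comap (act h) (N ⊔ K) :=
    sup_le (fun g hg => Subgroup.mem_comap.2 (Subgroup.mem_sup_left (hN h g hg)))
      (fun g hg => Subgroup.mem_comap.2 (Subgroup.mem_sup_right (hK h g hg)))
  exact fun g hg => Subgroup.mem_comap.1 (hle hg)

/-- Modular-law style cancellation: if `N ≤ P`, `P ≤ N ⊔ M` and `P ⊓ M ≤ N` (with `M`
normal), then `P ≤ N`. -/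
lemma le_of_le_sup_of_inf_le {M N P : Subgroup G} (hM : M.Normal) (hNP : N ≤ P)
    (hsup : P ≤ N ⊔ M) (hinf : P ⊓ M ≤ N) : P ≤ N := by
  haveI := hM
  intro p hp
  have h1 : p ∈ ((N : Set G) * (M : Set G)) := by
    rw [← Subgroup.mul_normal N M]
    exact hsup hp
  rw [Set.mem_mul] at h1
  obtain ⟨n, hn, m, hm, rfl⟩ := h1
  have hmP : m ∈ P := by
    have he : m = n⁻¹ * (n * m) := by group
    rw [he]
    exact P.mul_mem (P.inv_mem (hNP hn)) hp
  exact N.mul_mem hn (hinf ⟨hmP, hm⟩)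

/-- If `M ⊔ Q = ⊤` (`Q` normal) and `M ≤ A`, then `(A ⊓ Q) ⊔ M = A`. -/
lemma inf_sup_cancel_of_complT {M Q A : Subgroup G} (hQ : Q.Normal) (hsupT : M ⊔ Q = ⊤)
    (hMA : M ≤ A) : (A ⊓ Q) ⊔ M = A := by
  haveI := hQ
  refine le_antisymm (sup_le inf_le_left hMA) ?_
  intro a ha
  have h1 : a ∈ ((M : Set G) * (Q : Set G)) := by
    rw [← Subgroup.mul_normal M Q, hsupT]
    exact Subgroup.mem_top a
  rw [Set.mem_mul] at h1
  obtain ⟨m, hm, q, hq, rfl⟩ := h1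
  have hqA : q ∈ A ⊓ Q := by
    refine ⟨?_, hq⟩
    have he : q = m⁻¹ * (m * q) := by group
    rw [he]
    exact A.mul_mem (A.inv_mem (hMA hm)) ha
  exact Subgroup.mul_mem _ (Subgroup.mem_sup_right hm) (Subgroup.mem_sup_left hqA)

/-- If `M ⊓ Q = ⊥`, `C ≤ Q` (`C` normal) and `B ≤ M`, then `(C ⊔ B) ⊓ M = B`. -/
lemma sup_inf_cancel_of_complB {M Q C B : Subgroup G} (hC : C.Normal) (hCQ : C ≤ Q)
    (hinfB : M ⊓ Q = ⊥) (hBM : B ≤ M) : (C ⊔ B) ⊓ M = B := by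
  haveI := hC
  refine le_antisymm ?_ (le_inf le_sup_right hBM)
  intro x hx
  rw [Subgroup.mem_inf] at hx
  obtain ⟨hx1, hx2⟩ := hx
  have h1 : x ∈ ((C : Set G) * (B : Set G)) := by
    rw [← Subgroup.normal_mul C B]
    exact hx1
  rw [Set.mem_mul] at h1
  obtain ⟨c, hc, b, hb, rfl⟩ := h1
  have hcM : c ∈ M := by
    have he : c = (c * b) * b⁻¹ := by group
    rw [he]
    exact M.mul_mem hx2 (M.inv_mem (hBM hb))
  have hcbot : c ∈ M ⊓ Q := ⟨hcM, hCQ hc⟩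
  rw [hinfB, Subgroup.mem_bot] at hcbot
  rw [hcbot, one_mul]
  exact hb

end GroupAux

namespace Ordinal

theorem nadd_lt_nadd_right {b c : Ordinal.{u}} (h : b < c) (a : Ordinal.{u}) :
    nadd b a < nadd c a := by
  rw [nadd.eq_1 c a]
  refine lt_of_lt_of_le (Order.lt_succ (nadd b a)) (le_trans ?_ (le_max_left _ _))
  exact Ordinal.le_iSup (fun x : Set.Iio c => Order.succ (nadd x.1 a)) ⟨b, h⟩

theorem nadd_lt_nadd_left {b c : Ordinal.{u}} (h : b < c) (a : Ordinal.{u}) :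
    nadd a b < nadd a c := by
  rw [nadd.eq_1 a c]
  refine lt_of_lt_of_le (Order.lt_succ (nadd a b)) (le_trans ?_ (le_max_right _ _))
  exact Ordinal.le_iSup (fun x : Set.Iio c => Order.succ (nadd a x.1)) ⟨b, h⟩

theorem nadd_le_nadd_right {b c : Ordinal.{u}} (h : b ≤ c) (a : Ordinal.{u}) :
    nadd b a ≤ nadd c a := by
  rcases h.lt_or_eq with h | h
  · exact (nadd_lt_nadd_right h a).le
  · rw [h]

theorem nadd_le_nadd_left {b c : Ordinal.{u}} (h : b ≤ c) (a : Ordinal.{u}) :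
    nadd a b ≤ nadd a c := by
  rcases h.lt_or_eq with h | h
  · exact (nadd_lt_nadd_left h a).le
  · rw [h]

theorem nadd_le_iff {a b c : Ordinal.{u}} :
    nadd b c ≤ a ↔ (∀ b' < b, nadd b' c < a) ∧ ∀ c' < c, nadd b c' < a := by
  constructor
  · intro h
    exact ⟨fun b' hb => (nadd_lt_nadd_right hb c).trans_le h,
      fun c' hc => (nadd_lt_nadd_left hc b).trans_le h⟩
  · rintro ⟨h1, h2⟩
    rw [nadd.eq_1 b c]
    refine max_le (Ordinal.iSup_le fun x => ?_) (Ordinal.iSup_le fun x => ?_)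
    · exact Order.succ_le_of_lt (h1 x.1 x.2)
    · exact Order.succ_le_of_lt (h2 x.1 x.2)

end Ordinal

open scoped NaturalOps in
/-- Let `H` be a semigroup and `G` an `H`-group with `H`-max-n, in an
exact sequence of `H`-groups `1 → M → G → Q → 1` (`M` an `H`-stable normal subgroup,
`Q = G/M`). Then `ℓ_H(Q) + ℓ_{GH}(M) ≤ ℓ_H(G) ≤ ℓ_H(Q) ⊕ ℓ_{GH}(M)` where `⊕` is the
natural (Hessenberg) sum; here `ℓ_H(G) = gtRank ⊥` and `ℓ_H(Q) = gtRank M` in the lattice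
of `H`-stable normal subgroups of `G`, and `ℓ_{GH}(M) = gtRank ⊥` in the lattice of
`H`-stable normal subgroups of `G` contained in `M`. Moreover, if `G = M × Q` as an
`H`-group (i.e. `M` admits an `H`-stable normal complement), then
`ℓ_H(G) = ℓ_H(Q) ⊕ ℓ_{GH}(M)`. -/
theorem length_extension_bounds {H : Type*} [Semigroup H] {G : Type u} [Group G]
    (act : H →ₙ* Monoid.End G)
    (hmax : WellFounded ((· > ·) :
      {N : Subgroup G // N.Normal ∧ HStable act N} →
        {N : Subgroup G // N.Normal ∧ HStable act N} → Prop))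
    (M : Subgroup G) (hM : M.Normal) (hMs : HStable act M) :
    (gtRank (⟨M, hM, hMs⟩ : {N : Subgroup G // N.Normal ∧ HStable act N})
          + gtRank (hBotIn act M)
        ≤ gtRank (hBot act) ∧
      gtRank (hBot act)
        ≤ gtRank (⟨M, hM, hMs⟩ : {N : Subgroup G // N.Normal ∧ HStable act N})
            ♯ gtRank (hBotIn act M)) ∧
    (∀ Q : Subgroup G, Q.Normal → HStable act Q → M ⊓ Q = ⊥ → M ⊔ Q = ⊤ →
      gtRank (hBot act)
        = gtRank (⟨M, hM, hMs⟩ : {N : Subgroup G // N.Normal ∧ HStable act N})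
            ♯ gtRank (hBotIn act M)) := by
  have hmaxM : WellFounded ((· > ·) : {K : Subgroup G // (K.Normal ∧ HStable act K) ∧ K ≤ M} → {K : Subgroup G // (K.Normal ∧ HStable act K) ∧ K ≤ M} → Prop) := by
    refine Subrelation.wf (r := InvImage ((· > ·) : {N : Subgroup G // N.Normal ∧ HStable act N} → {N : Subgroup G // N.Normal ∧ HStable act N} → Prop)
      (fun K : {K : Subgroup G // (K.Normal ∧ HStable act K) ∧ K ≤ M} => (⟨K.1, K.2.1⟩ : {N : Subgroup G // N.Normal ∧ HStable act N}))) ?_ (InvImage.wf _ hmax)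
    intro a b hab
    exact Subtype.mk_lt_mk.2 (Subtype.coe_lt_coe.2 hab)
  have lemA : ∀ B : {K : Subgroup G // (K.Normal ∧ HStable act K) ∧ K ≤ M},
      gtRank (⟨M, hM, hMs⟩ : {N : Subgroup G // N.Normal ∧ HStable act N}) + gtRank B ≤ gtRank (⟨B.1, B.2.1⟩ : {N : Subgroup G // N.Normal ∧ HStable act N}) := by
    intro B
    refine hmaxM.induction (C := fun B : {K : Subgroup G // (K.Normal ∧ HStable act K) ∧ K ≤ M} =>
      gtRank (⟨M, hM, hMs⟩ : {N : Subgroup G // N.Normal ∧ HStable act N}) + gtRank B ≤ gtRank (⟨B.1, B.2.1⟩ : {N : Subgroup G // N.Normal ∧ HStable act N})) B ?_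
    intro B IH
    refine le_of_forall_lt fun γ hγ => ?_
    rcases lt_or_ge γ (gtRank (⟨M, hM, hMs⟩ : {N : Subgroup G // N.Normal ∧ HStable act N})) with h | h
    · exact h.trans_le (gtRank_le_of_le hmax (Subtype.mk_le_mk.2 B.2.2))
    · have hγ' : gtRank (⟨M, hM, hMs⟩ : {N : Subgroup G // N.Normal ∧ HStable act N}) + (γ - gtRank (⟨M, hM, hMs⟩ : {N : Subgroup G // N.Normal ∧ HStable act N}))
          < gtRank (⟨M, hM, hMs⟩ : {N : Subgroup G // N.Normal ∧ HStable act N}) + gtRank B := by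
        rwa [Ordinal.add_sub_cancel_of_le h]
      have hδ : γ - gtRank (⟨M, hM, hMs⟩ : {N : Subgroup G // N.Normal ∧ HStable act N}) < gtRank B :=
        (add_lt_add_iff_left _).1 hγ'
      obtain ⟨B', hB', hle⟩ := exists_gt_of_lt_gtRank hmaxM hδ
      calc γ = gtRank (⟨M, hM, hMs⟩ : {N : Subgroup G // N.Normal ∧ HStable act N}) + (γ - gtRank (⟨M, hM, hMs⟩ : {N : Subgroup G // N.Normal ∧ HStable act N})) :=
            (Ordinal.add_sub_cancel_of_le h).symm
        _ ≤ gtRank (⟨M, hM, hMs⟩ : {N : Subgroup G // N.Normal ∧ HStable act N}) + gtRank B' := add_le_add_right hle _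
        _ ≤ gtRank (⟨B'.1, B'.2.1⟩ : {N : Subgroup G // N.Normal ∧ HStable act N}) := IH B' hB'
        _ < gtRank (⟨B.1, B.2.1⟩ : {N : Subgroup G // N.Normal ∧ HStable act N}) :=
            gtRank_lt_of_gt hmax (Subtype.mk_lt_mk.2 (Subtype.coe_lt_coe.2 hB'))
  have hsupP : ∀ N : {N : Subgroup G // N.Normal ∧ HStable act N}, (N.1 ⊔ M).Normal ∧ HStable act (N.1 ⊔ M) := fun N => by
    haveI := N.2.1; haveI := hM
    exact ⟨inferInstance, HStable.sup' N.2.2 hMs⟩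
  have hinfP : ∀ N : {N : Subgroup G // N.Normal ∧ HStable act N}, ((N.1 ⊓ M).Normal ∧ HStable act (N.1 ⊓ M)) ∧ N.1 ⊓ M ≤ M :=
    fun N => by
      haveI := N.2.1; haveI := hM
      exact ⟨⟨inferInstance, HStable.inf' N.2.2 hMs⟩, inf_le_right⟩
  have lemB : ∀ N : {N : Subgroup G // N.Normal ∧ HStable act N},
      gtRank N ≤ gtRank (⟨N.1 ⊔ M, hsupP N⟩ : {N : Subgroup G // N.Normal ∧ HStable act N}) ♯ gtRank (⟨N.1 ⊓ M, hinfP N⟩ : {K : Subgroup G // (K.Normal ∧ HStable act K) ∧ K ≤ M}) := by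
    intro N
    refine hmax.induction (C := fun N : {N : Subgroup G // N.Normal ∧ HStable act N} =>
      gtRank N ≤ gtRank (⟨N.1 ⊔ M, hsupP N⟩ : {N : Subgroup G // N.Normal ∧ HStable act N})
        ♯ gtRank (⟨N.1 ⊓ M, hinfP N⟩ : {K : Subgroup G // (K.Normal ∧ HStable act K) ∧ K ≤ M})) N ?_
    intro N IH
    refine gtRank_le hmax fun P hP => ?_
    have hNP : N.1 ≤ P.1 := (Subtype.coe_lt_coe.2 hP).le
    have hsup_le : N.1 ⊔ M ≤ P.1 ⊔ M := sup_le_sup_right hNP M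
    have hinf_le : N.1 ⊓ M ≤ P.1 ⊓ M := inf_le_inf_right M hNP
    have key : N.1 ⊔ M < P.1 ⊔ M ∨ N.1 ⊓ M < P.1 ⊓ M := by
      by_contra hcon
      push_neg at hcon
      have h1 : P.1 ⊔ M ≤ N.1 ⊔ M := (hsup_le.lt_or_eq.resolve_left hcon.1).ge
      have h2 : P.1 ⊓ M ≤ N.1 ⊓ M := (hinf_le.lt_or_eq.resolve_left hcon.2).ge
      have hle : P.1 ≤ N.1 :=
        le_of_le_sup_of_inf_le hM hNP (le_sup_left.trans h1) (h2.trans inf_le_left)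
      exact (Subtype.coe_lt_coe.2 hP).not_ge hle
    have hstep : gtRank (⟨P.1 ⊔ M, hsupP P⟩ : {N : Subgroup G // N.Normal ∧ HStable act N}) ♯ gtRank (⟨P.1 ⊓ M, hinfP P⟩ : {K : Subgroup G // (K.Normal ∧ HStable act K) ∧ K ≤ M})
        < gtRank (⟨N.1 ⊔ M, hsupP N⟩ : {N : Subgroup G // N.Normal ∧ HStable act N}) ♯ gtRank (⟨N.1 ⊓ M, hinfP N⟩ : {K : Subgroup G // (K.Normal ∧ HStable act K) ∧ K ≤ M}) := by
      rcases key with hk | hk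
      · calc gtRank (⟨P.1 ⊔ M, hsupP P⟩ : {N : Subgroup G // N.Normal ∧ HStable act N}) ♯ gtRank (⟨P.1 ⊓ M, hinfP P⟩ : {K : Subgroup G // (K.Normal ∧ HStable act K) ∧ K ≤ M})
            ≤ gtRank (⟨P.1 ⊔ M, hsupP P⟩ : {N : Subgroup G // N.Normal ∧ HStable act N}) ♯ gtRank (⟨N.1 ⊓ M, hinfP N⟩ : {K : Subgroup G // (K.Normal ∧ HStable act K) ∧ K ≤ M}) :=
              Ordinal.nadd_le_nadd_left
                (gtRank_le_of_le hmaxM (Subtype.mk_le_mk.2 hinf_le)) _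
          _ < gtRank (⟨N.1 ⊔ M, hsupP N⟩ : {N : Subgroup G // N.Normal ∧ HStable act N}) ♯ gtRank (⟨N.1 ⊓ M, hinfP N⟩ : {K : Subgroup G // (K.Normal ∧ HStable act K) ∧ K ≤ M}) :=
              Ordinal.nadd_lt_nadd_right
                (gtRank_lt_of_gt hmax (Subtype.mk_lt_mk.2 hk)) _
      · calc gtRank (⟨P.1 ⊔ M, hsupP P⟩ : {N : Subgroup G // N.Normal ∧ HStable act N}) ♯ gtRank (⟨P.1 ⊓ M, hinfP P⟩ : {K : Subgroup G // (K.Normal ∧ HStable act K) ∧ K ≤ M})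
            ≤ gtRank (⟨N.1 ⊔ M, hsupP N⟩ : {N : Subgroup G // N.Normal ∧ HStable act N}) ♯ gtRank (⟨P.1 ⊓ M, hinfP P⟩ : {K : Subgroup G // (K.Normal ∧ HStable act K) ∧ K ≤ M}) :=
              Ordinal.nadd_le_nadd_right
                (gtRank_le_of_le hmax (Subtype.mk_le_mk.2 hsup_le)) _
          _ < gtRank (⟨N.1 ⊔ M, hsupP N⟩ : {N : Subgroup G // N.Normal ∧ HStable act N}) ♯ gtRank (⟨N.1 ⊓ M, hinfP N⟩ : {K : Subgroup G // (K.Normal ∧ HStable act K) ∧ K ≤ M}) :=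
              Ordinal.nadd_lt_nadd_left
                (gtRank_lt_of_gt hmaxM (Subtype.mk_lt_mk.2 hk)) _
    exact (IH P hP).trans_lt hstep
  have part1 : gtRank (⟨M, hM, hMs⟩ : {N : Subgroup G // N.Normal ∧ HStable act N}) + gtRank (hBotIn act M) ≤ gtRank (hBot act) := by
    have h := lemA (hBotIn act M)
    have e3 : (⟨(hBotIn act M).1, (hBotIn act M).2.1⟩ : {N : Subgroup G // N.Normal ∧ HStable act N}) = hBot act := Subtype.ext rfl
    rwa [e3] at h
  have part2 : gtRank (hBot act)
      ≤ gtRank (⟨M, hM, hMs⟩ : {N : Subgroup G // N.Normal ∧ HStable act N}) ♯ gtRank (hBotIn act M) := by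
    have h := lemB (hBot act)
    have e1 : (⟨(hBot act).1 ⊔ M, hsupP (hBot act)⟩ : {N : Subgroup G // N.Normal ∧ HStable act N}) = ⟨M, hM, hMs⟩ :=
      Subtype.ext (by show (⊥ : Subgroup G) ⊔ M = M; exact bot_sup_eq M)
    have e2 : (⟨(hBot act).1 ⊓ M, hinfP (hBot act)⟩ : {K : Subgroup G // (K.Normal ∧ HStable act K) ∧ K ≤ M}) = hBotIn act M :=
      Subtype.ext (by show (⊥ : Subgroup G) ⊓ M = ⊥; exact bot_inf_eq M)
    rwa [e1, e2] at h
  refine ⟨⟨part1, part2⟩, ?_⟩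
  intro Q hQ hQs hMQ hMQT
  have hFP : ∀ (A : {N : Subgroup G // N.Normal ∧ HStable act N}) (B : {K : Subgroup G // (K.Normal ∧ HStable act K) ∧ K ≤ M}),
      ((A.1 ⊓ Q) ⊔ B.1).Normal ∧ HStable act ((A.1 ⊓ Q) ⊔ B.1) := fun A B => by
    haveI := A.2.1; haveI := hQ; haveI := B.2.1.1
    exact ⟨inferInstance, HStable.sup' (HStable.inf' A.2.2 hQs) B.2.1.2⟩
  have idA : ∀ A B : Subgroup G, M ≤ A → B ≤ M → ((A ⊓ Q) ⊔ B) ⊔ M = A := by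
    intro A B hMA hBM
    rw [sup_assoc, sup_eq_right.2 hBM]
    exact inf_sup_cancel_of_complT hQ hMQT hMA
  have idB : ∀ A B : Subgroup G, A.Normal → B ≤ M → ((A ⊓ Q) ⊔ B) ⊓ M = B := by
    intro A B hA hBM
    haveI := hA; haveI := hQ
    exact sup_inf_cancel_of_complB inferInstance inf_le_right hMQ hBM
  have lemC : ∀ A : {N : Subgroup G // N.Normal ∧ HStable act N}, M ≤ A.1 → ∀ B : {K : Subgroup G // (K.Normal ∧ HStable act K) ∧ K ≤ M},
      gtRank A ♯ gtRank B ≤ gtRank (⟨(A.1 ⊓ Q) ⊔ B.1, hFP A B⟩ : {N : Subgroup G // N.Normal ∧ HStable act N}) := by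
    intro A
    refine hmax.induction (C := fun A : {N : Subgroup G // N.Normal ∧ HStable act N} => M ≤ A.1 → ∀ B : {K : Subgroup G // (K.Normal ∧ HStable act K) ∧ K ≤ M},
      gtRank A ♯ gtRank B ≤ gtRank (⟨(A.1 ⊓ Q) ⊔ B.1, hFP A B⟩ : {N : Subgroup G // N.Normal ∧ HStable act N})) A ?_
    intro A IHA hMA B
    refine hmaxM.induction (C := fun B : {K : Subgroup G // (K.Normal ∧ HStable act K) ∧ K ≤ M} =>
      gtRank A ♯ gtRank B ≤ gtRank (⟨(A.1 ⊓ Q) ⊔ B.1, hFP A B⟩ : {N : Subgroup G // N.Normal ∧ HStable act N})) B ?_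
    intro B IHB
    rw [Ordinal.nadd_le_iff]
    constructor
    · intro α hα
      obtain ⟨A', hA', hαle⟩ := exists_gt_of_lt_gtRank hmax hα
      have hA'le : A.1 ≤ A'.1 := (Subtype.coe_lt_coe.2 hA').le
      have hMA' : M ≤ A'.1 := hMA.trans hA'le
      have hFle : (A.1 ⊓ Q) ⊔ B.1 ≤ (A'.1 ⊓ Q) ⊔ B.1 :=
        sup_le_sup_right (inf_le_inf_right Q hA'le) B.1
      have hFlt : (A.1 ⊓ Q) ⊔ B.1 < (A'.1 ⊓ Q) ⊔ B.1 := by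
        refine hFle.lt_of_ne fun hcon => ?_
        have e1 : A.1 = A'.1 := by
          rw [← idA A.1 B.1 hMA B.2.2, ← idA A'.1 B.1 hMA' B.2.2, hcon]
        exact (Subtype.coe_lt_coe.2 hA').ne e1
      calc α ♯ gtRank B ≤ gtRank A' ♯ gtRank B := Ordinal.nadd_le_nadd_right hαle _
        _ ≤ gtRank (⟨(A'.1 ⊓ Q) ⊔ B.1, hFP A' B⟩ : {N : Subgroup G // N.Normal ∧ HStable act N}) := IHA A' hA' hMA' B
        _ < gtRank (⟨(A.1 ⊓ Q) ⊔ B.1, hFP A B⟩ : {N : Subgroup G // N.Normal ∧ HStable act N}) :=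
            gtRank_lt_of_gt hmax (Subtype.mk_lt_mk.2 hFlt)
    · intro β hβ
      obtain ⟨B', hB', hβle⟩ := exists_gt_of_lt_gtRank hmaxM hβ
      have hB'le : B.1 ≤ B'.1 := (Subtype.coe_lt_coe.2 hB').le
      have hFle : (A.1 ⊓ Q) ⊔ B.1 ≤ (A.1 ⊓ Q) ⊔ B'.1 := sup_le_sup_left hB'le _
      have hFlt : (A.1 ⊓ Q) ⊔ B.1 < (A.1 ⊓ Q) ⊔ B'.1 := by
        refine hFle.lt_of_ne fun hcon => ?_
        have e1 : B.1 = B'.1 := by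
          rw [← idB A.1 B.1 A.2.1 B.2.2, ← idB A.1 B'.1 A.2.1 B'.2.2, hcon]
        exact (Subtype.coe_lt_coe.2 hB').ne e1
      calc gtRank A ♯ β ≤ gtRank A ♯ gtRank B' := Ordinal.nadd_le_nadd_left hβle _
        _ ≤ gtRank (⟨(A.1 ⊓ Q) ⊔ B'.1, hFP A B'⟩ : {N : Subgroup G // N.Normal ∧ HStable act N}) := IHB B' hB'
        _ < gtRank (⟨(A.1 ⊓ Q) ⊔ B.1, hFP A B⟩ : {N : Subgroup G // N.Normal ∧ HStable act N}) :=
            gtRank_lt_of_gt hmax (Subtype.mk_lt_mk.2 hFlt)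
  have hge := lemC ⟨M, hM, hMs⟩ le_rfl (hBotIn act M)
  have e4 : (⟨((⟨M, hM, hMs⟩ : {N : Subgroup G // N.Normal ∧ HStable act N}).1 ⊓ Q) ⊔ (hBotIn act M).1,
      hFP ⟨M, hM, hMs⟩ (hBotIn act M)⟩ : {N : Subgroup G // N.Normal ∧ HStable act N}) = hBot act :=
    Subtype.ext (by show (M ⊓ Q) ⊔ (⊥ : Subgroup G) = ⊥; rw [hMQ, sup_bot_eq])
  rw [e4] at hge
  exact le_antisymm part2 hge
end
end

section
/- Let H be a semigroup and G an H-group satisfying H-max-n. Then ℓ'_H(G) = sup{ℓ'_H(G/N) + 1 : N an H-stable normal subgroup of G with ℓ_{GH}(N) ≥ ω} (sup ∅ = 0). -/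
noncomputable section

universe u

section AuxRank

open Ordinal

universe v

variable {α : Type v} [PartialOrder α]

theorem gtRank_def (h : WellFounded ((· > ·) : α → α → Prop)) (x : α) :
    gtRank x = (h.apply x).rank := by
  unfold gtRank
  rw [dif_pos h]

theorem gtRank_eq (h : WellFounded ((· > ·) : α → α → Prop)) (x : α) :
    gtRank x = ⨆ y : {y : α // y > x}, Order.succ (gtRank y.1) := by
  simp only [gtRank_def h]
  exact Acc.rank_eq _

theorem gtRank_lt (h : WellFounded ((· > ·) : α → α → Prop)) {x y : α} (hxy : x < y) :
    gtRank y < gtRank x := by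
  simp only [gtRank_def h]
  exact Acc.rank_lt_of_rel (h.apply x) hxy

theorem gtRank_anti (h : WellFounded ((· > ·) : α → α → Prop)) {x y : α} (hxy : x ≤ y) :
    gtRank y ≤ gtRank x := by
  rcases hxy.lt_or_eq with h' | rfl
  · exact (gtRank_lt h h').le
  · exact le_rfl

theorem wf_subtype {P Q : α → Prop} (hQP : ∀ x, Q x → P x)
    (h : WellFounded ((· > ·) : {x // P x} → {x // P x} → Prop)) :
    WellFounded ((· > ·) : {x // Q x} → {x // Q x} → Prop) := by
  have h2 := InvImage.wf (fun x : {x // Q x} => (⟨x.1, hQP _ x.2⟩ : {x // P x})) h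
  exact Subrelation.wf (fun {a b} hab => hab) h2

end AuxRank

section AuxGrp

open Ordinal Pointwise

variable {H : Type*} [Mul H] {G : Type u} [Group G]

theorem hstable_sup (act : H →ₙ* Monoid.End G) {A B : Subgroup G}
    (hA : HStable act A) (hB : HStable act B) : HStable act (A ⊔ B) := by
  intro h g hg
  have hmap : Subgroup.map (act h : G →* G) (A ⊔ B) ≤ A ⊔ B := by
    refine (Subgroup.map_sup A B (act h)).le.trans ?_
    exact sup_le_sup (Subgroup.map_le_iff_le_comap.2 fun g hg => hA h g hg)
      (Subgroup.map_le_iff_le_comap.2 fun g hg => hB h g hg)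
  exact hmap ⟨g, hg, rfl⟩

theorem hstable_inf (act : H →ₙ* Monoid.End G) {A B : Subgroup G}
    (hA : HStable act A) (hB : HStable act B) : HStable act (A ⊓ B) :=
  fun h g hg => ⟨hA h g hg.1, hB h g hg.2⟩

theorem dedekind_ns {x y N : Subgroup G} (hN : N.Normal) (hxy : x ≤ y)
    (hinf : x ⊓ N = y ⊓ N) (hsup : x ⊔ N = y ⊔ N) : x = y := by
  haveI := hN
  refine le_antisymm hxy fun g hg => ?_
  have hg2 : g ∈ (x : Set G) * (N : Set G) := by
    rw [← Subgroup.mul_normal, hsup]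
    exact le_sup_left (α := Subgroup G) hg
  obtain ⟨a, ha, n, hn, rfl⟩ := hg2
  have hay : a ∈ y := hxy ha
  have hny : n ∈ y := by
    have := mul_mem (inv_mem hay) hg
    simpa using this
  have hx : n ∈ x ⊓ N := hinf ▸ (⟨hny, hn⟩ : n ∈ y ⊓ N)
  exact mul_mem ha hx.1

/-- The lattice of `H`-stable normal subgroups. -/
abbrev NSL (act : H →ₙ* Monoid.End G) : Type u := {N : Subgroup G // N.Normal ∧ HStable act N}

/-- The lattice of `H`-stable normal subgroups contained in `M`. -/
abbrev NSLe (act : H →ₙ* Monoid.End G) (M : Subgroup G) : Type u :=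
  {K : Subgroup G // (K.Normal ∧ HStable act K) ∧ K ≤ M}

def nslSup (act : H →ₙ* Monoid.End G) (N : Subgroup G) (hN : N.Normal ∧ HStable act N)
    (x : NSL act) : NSL act :=
  ⟨x.1 ⊔ N, by haveI := x.2.1; haveI := hN.1; exact Subgroup.sup_normal _ _,
    hstable_sup act x.2.2 hN.2⟩

def nslInf (act : H →ₙ* Monoid.End G) (N : Subgroup G) (hN : N.Normal ∧ HStable act N)
    (x : NSL act) : NSLe act N :=
  ⟨x.1 ⊓ N, ⟨by haveI := x.2.1; haveI := hN.1; exact Subgroup.normal_inf_normal _ _,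
    hstable_inf act x.2.2 hN.2⟩, inf_le_right⟩

theorem lemA (act : H →ₙ* Monoid.End G)
    (hmax : WellFounded ((· > ·) : NSL act → NSL act → Prop))
    (N : Subgroup G) (hN : N.Normal ∧ HStable act N) (x : NSLe act N) :
    gtRank (⟨N, hN⟩ : NSL act) + gtRank x ≤ gtRank (⟨x.1, x.2.1⟩ : NSL act) := by
  have wfQ : WellFounded ((· > ·) : NSLe act N → NSLe act N → Prop) :=
    wf_subtype (fun x hx => hx.1) hmax
  refine wfQ.induction
    (C := fun x => gtRank (⟨N, hN⟩ : NSL act) + gtRank x ≤ gtRank (⟨x.1, x.2.1⟩ : NSL act))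
    x ?_
  intro x IH
  rw [gtRank_eq wfQ x]
  rcases isEmpty_or_nonempty {y : NSLe act N // y > x} with he | hne
  · rw [ciSup_of_empty]
    simp only [csSup_empty, Ordinal.bot_eq_zero, add_zero]
    exact gtRank_anti hmax (show (⟨x.1, x.2.1⟩ : NSL act) ≤ ⟨N, hN⟩ from x.2.2)
  · rw [(Ordinal.isNormal_add_right _).map_iSup (Ordinal.bddAbove_range _)]
    refine Ordinal.iSup_le_iff.2 fun y => ?_
    have h1 := IH y.1 y.2
    have h2 : gtRank (⟨y.1.1, y.1.2.1⟩ : NSL act) < gtRank (⟨x.1, x.2.1⟩ : NSL act) :=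
      gtRank_lt hmax (show (⟨x.1, x.2.1⟩ : NSL act) < ⟨y.1.1, y.1.2.1⟩ from y.2)
    calc gtRank (⟨N, hN⟩ : NSL act) + Order.succ (gtRank y.1)
        = Order.succ (gtRank (⟨N, hN⟩ : NSL act) + gtRank y.1) := by
          rw [Order.succ_eq_add_one, Order.succ_eq_add_one, add_assoc]
      _ ≤ Order.succ (gtRank (⟨y.1.1, y.1.2.1⟩ : NSL act)) := Order.succ_le_succ h1
      _ ≤ gtRank (⟨x.1, x.2.1⟩ : NSL act) := Order.succ_le_of_lt h2

end AuxGrp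

section AuxB

open Ordinal

variable {H : Type*} [Mul H] {G : Type u} [Group G]

theorem lemB (act : H →ₙ* Monoid.End G)
    (hmax : WellFounded ((· > ·) : NSL act → NSL act → Prop))
    (N : Subgroup G) (hN : N.Normal ∧ HStable act N)
    (hfin : gtRank (hBotIn act N) < Ordinal.omega0) (x : NSL act) :
    gtRank x ≤ gtRank (nslSup act N hN x) + gtRank (nslInf act N hN x) := by
  have wfQ : WellFounded ((· > ·) : NSLe act N → NSLe act N → Prop) :=
    wf_subtype (fun x hx => hx.1) hmax
  refine hmax.induction
    (C := fun x => gtRank x ≤ gtRank (nslSup act N hN x) + gtRank (nslInf act N hN x)) x ?_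
  intro x IH
  rw [gtRank_eq hmax x]
  refine Ordinal.iSup_le_iff.2 fun y => ?_
  have IH' := IH y.1 y.2
  have hlev : x.1 ≤ y.1.1 := le_of_lt y.2
  have hSle : nslSup act N hN x ≤ nslSup act N hN y.1 :=
    show x.1 ⊔ N ≤ y.1.1 ⊔ N from sup_le_sup_right hlev N
  have hIle : nslInf act N hN x ≤ nslInf act N hN y.1 :=
    show x.1 ⊓ N ≤ y.1.1 ⊓ N from inf_le_inf_right N hlev
  have hfx : gtRank (nslInf act N hN x) < Ordinal.omega0 :=
    lt_of_le_of_lt (gtRank_anti wfQ (show (⊥ : Subgroup G) ≤ x.1 ⊓ N from bot_le)) hfin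
  have hfy : gtRank (nslInf act N hN y.1) < Ordinal.omega0 :=
    lt_of_le_of_lt (gtRank_anti wfQ hIle) hfx
  obtain ⟨n, hn⟩ := Ordinal.lt_omega0.1 hfx
  obtain ⟨n', hn'⟩ := Ordinal.lt_omega0.1 hfy
  rcases lt_or_eq_of_le hSle with hS | hS
  · have hn'n : n' ≤ n := by
      have := gtRank_anti wfQ hIle
      rw [hn, hn'] at this
      exact_mod_cast this
    have h2 : gtRank (nslSup act N hN y.1) < gtRank (nslSup act N hN x) := gtRank_lt hmax hS
    calc Order.succ (gtRank y.1)
        ≤ Order.succ (gtRank (nslSup act N hN y.1) + gtRank (nslInf act N hN y.1)) :=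
          Order.succ_le_succ IH'
      _ = gtRank (nslSup act N hN y.1) + ((n' : Ordinal) + 1) := by
          rw [hn', Order.succ_eq_add_one, add_assoc]
      _ ≤ gtRank (nslSup act N hN y.1) + ((1 : Ordinal) + (n : Ordinal)) := by
          refine add_le_add_right ?_ _
          have h1 : ((n' : Ordinal) + 1) = ((n' + 1 : ℕ) : Ordinal) := by push_cast; rfl
          have h2 : ((1 : Ordinal) + (n : Ordinal)) = ((1 + n : ℕ) : Ordinal) := by
            push_cast; rfl
          rw [h1, h2]
          exact_mod_cast (by omega : n' + 1 ≤ 1 + n)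
      _ = (gtRank (nslSup act N hN y.1) + 1) + (n : Ordinal) := by rw [add_assoc]
      _ ≤ gtRank (nslSup act N hN x) + (n : Ordinal) := by
          refine add_le_add_left ?_ _
          rw [Ordinal.add_one_eq_succ]
          exact Order.succ_le_of_lt h2
      _ = gtRank (nslSup act N hN x) + gtRank (nslInf act N hN x) := by rw [hn]
  · have hIlt : nslInf act N hN x < nslInf act N hN y.1 := by
      rcases lt_or_eq_of_le hIle with h | h
      · exact h
      · exfalso
        have hvals : x.1 = y.1.1 :=
          dedekind_ns hN.1 hlev (congrArg Subtype.val h) (congrArg Subtype.val hS)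
        exact absurd hvals (ne_of_lt (show x.1 < y.1.1 from y.2))
    have hlt : gtRank (nslInf act N hN y.1) < gtRank (nslInf act N hN x) := gtRank_lt wfQ hIlt
    have hn'ltn : n' < n := by
      rw [hn, hn'] at hlt
      exact_mod_cast hlt
    calc Order.succ (gtRank y.1)
        ≤ Order.succ (gtRank (nslSup act N hN y.1) + gtRank (nslInf act N hN y.1)) :=
          Order.succ_le_succ IH'
      _ = gtRank (nslSup act N hN x) + ((n' : Ordinal) + 1) := by
          rw [hn', hS, Order.succ_eq_add_one, add_assoc]
      _ ≤ gtRank (nslSup act N hN x) + (n : Ordinal) := by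
          refine add_le_add_right ?_ _
          have h1 : ((n' : Ordinal) + 1) = ((n' + 1 : ℕ) : Ordinal) := by push_cast; rfl
          rw [h1]
          exact_mod_cast Nat.succ_le_of_lt hn'ltn
      _ = gtRank (nslSup act N hN x) + gtRank (nslInf act N hN x) := by rw [hn]

end AuxB

/-- Let `H` be a semigroup and `G` an `H`-group satisfying `H`-max-n.
Then the reduced length satisfies
`ℓ'_H(G) = sup { ℓ'_H(G/N) + 1 : N an H-stable normal subgroup with ℓ_{GH}(N) ≥ ω }`
(`sup ∅ = 0`). Here `ℓ'` is the left quotient of `ℓ` by `ω` (so `ℓ = ω·ℓ' + r`, `r < ω`),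
`ℓ_H(G/N) = gtRank N` in the lattice of `H`-stable normal subgroups of `G`, and
`ℓ_{GH}(N) = gtRank ⊥` in the lattice of `H`-stable normal subgroups contained in `N`. -/
theorem reduced_length_eq_sup {H : Type*} [Semigroup H] {G : Type u} [Group G]
    (act : H →ₙ* Monoid.End G)
    (hmax : WellFounded ((· > ·) :
      {N : Subgroup G // N.Normal ∧ HStable act N} →
        {N : Subgroup G // N.Normal ∧ HStable act N} → Prop)) :
    gtRank (hBot act) / Ordinal.omega0 =
      sSup {β : Ordinal.{u} | ∃ (N : Subgroup G) (hN : N.Normal) (hNs : HStable act N),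
        Ordinal.omega0 ≤ gtRank (hBotIn act N) ∧
        β = gtRank (⟨N, hN, hNs⟩ : {K : Subgroup G // K.Normal ∧ HStable act K})
              / Ordinal.omega0 + 1} := by
  classical
  have hub : ∀ β ∈ {β : Ordinal.{u} | ∃ (N : Subgroup G) (hN : N.Normal) (hNs : HStable act N),
      Ordinal.omega0 ≤ gtRank (hBotIn act N) ∧
      β = gtRank (⟨N, hN, hNs⟩ : {K : Subgroup G // K.Normal ∧ HStable act K})
            / Ordinal.omega0 + 1},
      β ≤ gtRank (hBot act) / Ordinal.omega0 := by
    rintro β ⟨N, hN, hNs, hω, rfl⟩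
    rw [Ordinal.le_div Ordinal.omega0_ne_zero]
    have hA := lemA act hmax N ⟨hN, hNs⟩ (hBotIn act N)
    have hbe : (⟨(hBotIn act N).1, (hBotIn act N).2.1⟩ : NSL act) = hBot act := rfl
    rw [hbe] at hA
    set a := gtRank (⟨N, hN, hNs⟩ : NSL act) with ha
    calc Ordinal.omega0 * (a / Ordinal.omega0 + 1)
        = Ordinal.omega0 * (a / Ordinal.omega0) + Ordinal.omega0 := by rw [mul_add, mul_one]
      _ = Ordinal.omega0 * (a / Ordinal.omega0) + (a % Ordinal.omega0 + Ordinal.omega0) := by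
          rw [Ordinal.add_omega0 (Ordinal.mod_lt a Ordinal.omega0_ne_zero)]
      _ = a + Ordinal.omega0 := by rw [← add_assoc, Ordinal.div_add_mod]
      _ ≤ a + gtRank (hBotIn act N) := add_le_add_right hω a
      _ ≤ gtRank (hBot act) := hA
  refine le_antisymm ?_ (csSup_le' hub)
  refine le_of_forall_lt fun γ hγ => ?_
  have hωγ : Ordinal.omega0 * γ + Ordinal.omega0 ≤ gtRank (hBot act) := by
    have h1 : γ + 1 ≤ gtRank (hBot act) / Ordinal.omega0 := by
      rw [Ordinal.add_one_eq_succ]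
      exact Order.succ_le_of_lt hγ
    have h2 := (Ordinal.le_div Ordinal.omega0_ne_zero).1 h1
    calc Ordinal.omega0 * γ + Ordinal.omega0 = Ordinal.omega0 * (γ + 1) := by
          rw [mul_add, mul_one]
      _ ≤ _ := h2
  obtain ⟨m, hmT, hmmax⟩ := hmax.has_min {N : NSL act | Ordinal.omega0 * γ ≤ gtRank N}
    ⟨hBot act, le_trans le_self_add hωγ⟩
  have hmle : gtRank m ≤ Ordinal.omega0 * γ := by
    rw [gtRank_eq hmax m]
    refine Ordinal.iSup_le_iff.2 fun y => ?_
    have hy : gtRank y.1 < Ordinal.omega0 * γ := lt_of_not_ge fun hge => hmmax y.1 hge y.2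
    rcases eq_or_ne γ 0 with rfl | hγ0
    · rw [mul_zero] at hy
      exact absurd hy not_lt_zero
    · exact ((Ordinal.isSuccLimit_mul_left Ordinal.isSuccLimit_omega0
        (pos_iff_ne_zero.2 hγ0)).succ_lt hy).le
  have hmeq : gtRank m = Ordinal.omega0 * γ := le_antisymm hmle hmT
  have hsub : Ordinal.omega0 ≤ gtRank (hBotIn act m.1) := by
    by_contra hfin
    push_neg at hfin
    have hB := lemB act hmax m.1 m.2 hfin (hBot act)
    have e1 : nslSup act m.1 m.2 (hBot act) = m := Subtype.ext (bot_sup_eq m.1)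
    have e2 : nslInf act m.1 m.2 (hBot act) = hBotIn act m.1 := Subtype.ext (bot_inf_eq m.1)
    rw [e1, e2] at hB
    have hlt : gtRank m + gtRank (hBotIn act m.1) < Ordinal.omega0 * γ + Ordinal.omega0 := by
      rw [hmeq]
      exact add_lt_add_right hfin _
    exact absurd (lt_of_le_of_lt hB hlt) (not_lt_of_ge hωγ)
  have hmem : γ + 1 ∈ {β : Ordinal.{u} | ∃ (N : Subgroup G) (hN : N.Normal)
      (hNs : HStable act N), Ordinal.omega0 ≤ gtRank (hBotIn act N) ∧
      β = gtRank (⟨N, hN, hNs⟩ : {K : Subgroup G // K.Normal ∧ HStable act K})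
            / Ordinal.omega0 + 1} := by
    refine ⟨m.1, m.2.1, m.2.2, hsub, ?_⟩
    have : (⟨m.1, m.2.1, m.2.2⟩ : NSL act) = m := rfl
    rw [this, hmeq, Ordinal.mul_div_cancel _ Ordinal.omega0_ne_zero]
  have hlt1 : γ < γ + 1 := by
    rw [Ordinal.add_one_eq_succ]
    exact Order.lt_succ γ
  exact lt_of_lt_of_le hlt1 (le_csSup ⟨_, hub⟩ hmem)
end
end
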